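/- With B and Q as in the Hadamard-product SDP above and q ≥ n − 1, the multiplier set at X̄ = 0 is M(X̄) = {(Y, Z) ∈ S^n × S^n : Y + B∘Z = 0, Y ∈ S^n_-}, and this set is unbounded; consequently (by the Zowe–Kurcyusz characterization) the Robinson constraint qualification fails at X̄. -/

import Mathlib

open Matrix

lemma isSymm_of_neg_psd {m : Type*} [Fintype m] {Y : Matrix m m ℝ}
    (h : (-Y).PosSemidef) : Y.IsSymm := by
  have := h.isHermitian
  rw [Matrix.IsHermitian, conjTranspose_eq_transpose_of_trivial, Matrix.transpose_neg,
    neg_inj] at this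
  exact this

lemma psd_trace_nonneg {m : Type*} [Fintype m] [DecidableEq m] {M : Matrix m m ℝ}
    (h : M.PosSemidef) : 0 ≤ M.trace := by
  rw [Matrix.trace]
  refine Finset.sum_nonneg fun i _ => ?_
  simpa using h.dotProduct_mulVec_nonneg (Pi.single i 1)

lemma vecMulVec_psd {m : Type*} [Fintype m] (x : m → ℝ) :
    (Matrix.vecMulVec x x).PosSemidef := by
  refine Matrix.PosSemidef.of_dotProduct_mulVec_nonneg ?_ fun v => ?_
  · rw [Matrix.IsHermitian, conjTranspose_eq_transpose_of_trivial]
    ext i j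
    simp [Matrix.vecMulVec_apply, mul_comm]
  · have : dotProduct v ((Matrix.vecMulVec x x) *ᵥ v) = (x ⬝ᵥ v) * (x ⬝ᵥ v) := by
      simp only [dotProduct, Matrix.mulVec, Matrix.vecMulVec_apply, Finset.mul_sum,
        Finset.sum_mul]
      apply Finset.sum_congr rfl
      intro i _
      apply Finset.sum_congr rfl
      intro j _
      ring
    simpa [this] using mul_self_nonneg (x ⬝ᵥ v)

lemma trace_mul_vecMulVec {m : Type*} [Fintype m] (Y : Matrix m m ℝ) (x : m → ℝ) :
    (Y * Matrix.vecMulVec x x).trace = dotProduct x (Y *ᵥ x) := by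
  simp only [Matrix.trace, Matrix.diag, Matrix.mul_apply, Matrix.vecMulVec_apply,
    dotProduct, Matrix.mulVec, Finset.mul_sum]
  apply Finset.sum_congr rfl
  intro i _
  apply Finset.sum_congr rfl
  intro j _
  ring

lemma trace_cond_iff {m : Type*} [Fintype m] [DecidableEq m]
    (Y : Matrix m m ℝ) (hY : Y.IsSymm) :
    (∀ X' : Matrix m m ℝ, X'.PosSemidef → ((Y * X').trace ≤ 0)) ↔ (-Y).PosSemidef := by
  constructor
  · intro h
    refine Matrix.PosSemidef.of_dotProduct_mulVec_nonneg ?_ fun x => ?_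
    · rw [Matrix.IsHermitian, conjTranspose_eq_transpose_of_trivial, Matrix.transpose_neg, hY]
    · have := h _ (vecMulVec_psd x)
      rw [trace_mul_vecMulVec] at this
      simpa [Matrix.neg_mulVec, dotProduct_neg] using neg_nonneg.mpr this
  · intro h X' hX'
    obtain ⟨B, hB⟩ : ∃ B : Matrix m m ℝ, X' = star B * B := by
      open scoped MatrixOrder Matrix.Norms.L2Operator in
      exact CStarAlgebra.nonneg_iff_eq_star_mul_self.mp hX'.nonneg
    have key : (0:ℝ) ≤ ((-Y) * X').trace := by
      rw [hB, ← Matrix.mul_assoc, Matrix.trace_mul_comm, ← Matrix.mul_assoc]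
      exact psd_trace_nonneg (h.mul_mul_conjTranspose_same B)
    have : ((-Y) * X').trace = -((Y * X').trace) := by
      simp [Matrix.neg_mul]
    linarith [key, this ▸ key]

/-- for the Hadamard-product SDP (matrices of size `n+2`), the multiplier set at
`X̄ = 0` equals `{(Y,Z) : Y + B∘Z = 0, Y ∈ S₋}`, and this set is unbounded (hence, by
Zowe–Kurcyusz, the Robinson constraint qualification fails at `X̄`). -/
theorem stmt19 (n : ℕ) (q : ℝ) (hq : ((n : ℝ) + 1) ≤ q) :
    let last := Fin.last (n+1)
    let B : Matrix (Fin (n+2)) (Fin (n+2)) ℝ :=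
      fun i j => if i = last ∨ j = last then 1 else 0
    let Q : Matrix (Fin (n+2)) (Fin (n+2)) ℝ :=
      fun i j => if i = last then (if j = last then -1 else 0)
        else (if j = last then 0 else (if i = j then q else 1))
    let Xbar : Matrix (Fin (n+2)) (Fin (n+2)) ℝ := 0
    -- the multiplier (KKT) set at X̄ = 0 …
    let Mset : Set (Matrix (Fin (n+2)) (Fin (n+2)) ℝ × Matrix (Fin (n+2)) (Fin (n+2)) ℝ) :=
      {p | p.1.IsSymm ∧ p.2.IsSymm
        ∧ Matrix.hadamard Q Xbar + p.1 + Matrix.hadamard B p.2 = 0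
        ∧ ∀ X' : Matrix (Fin (n+2)) (Fin (n+2)) ℝ, X'.PosSemidef → ((p.1 * X').trace ≤ 0)}
    -- … equals {(Y,Z) : Y + B∘Z = 0, Y ∈ S₋}
    Mset = {p | p.2.IsSymm ∧ p.1 + Matrix.hadamard B p.2 = 0 ∧ (-p.1).PosSemidef}
    -- and it is unbounded
    ∧ ∀ c : ℝ, ∃ p ∈ Mset, c < |p.2 0 0| := by
  intro last B Q Xbar Mset
  have hQX : Matrix.hadamard Q Xbar = 0 := Matrix.hadamard_zero Q
  constructor
  · ext p
    simp only [Mset, Set.mem_setOf_eq, hQX, zero_add]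
    constructor
    · rintro ⟨h1, h2, h3, h4⟩
      exact ⟨h2, h3, (trace_cond_iff p.1 h1).mp h4⟩
    · rintro ⟨h2, h3, h4⟩
      have h1 : p.1.IsSymm := isSymm_of_neg_psd h4
      exact ⟨h1, h2, h3, (trace_cond_iff p.1 h1).mpr h4⟩
  · intro c
    have h0last : (0 : Fin (n+2)) ≠ last := by
      simp only [last]
      intro h
      have := congrArg Fin.val h
      simp [Fin.last] at this
    refine ⟨(0, fun i j => if i = 0 ∧ j = 0 then |c| + 1 else 0), ?_, ?_⟩
    · refine ⟨Matrix.isSymm_zero, ?_, ?_, ?_⟩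
      · ext i j
        simp only [Matrix.transpose_apply]
        by_cases hi : i = 0 <;> by_cases hj : j = 0 <;> simp [hi, hj, Matrix.transpose]
      · rw [hQX, zero_add, zero_add]
        ext i j
        simp only [Matrix.hadamard_apply, Matrix.zero_apply, B]
        by_cases hi : i = 0 ∧ j = 0
        · simp [hi.1, hi.2, h0last, Matrix.hadamard]
        · simp [hi, Matrix.hadamard]
      · intro X' hX'
        simp
    · show c < |(if (0:Fin (n+2)) = 0 ∧ (0:Fin (n+2)) = 0 then |c| + 1 else 0 : ℝ)|
      rw [if_pos ⟨rfl, rfl⟩, abs_of_nonneg (by positivity)]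
      linarith [le_abs_self c]
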